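/- Let F, G, H : ℝ² → ℝ be continuously differentiable, let y : ℝ² → ℝ be twice continuously differentiable with ∂₁y(x,h) = F(x, y(x,h)) for all (x,h) in an open set D, and let I : ℝ² → ℝ be twice continuously differentiable with ∂₁I(x,h) = G(x, y(x,h)) on D. If ∂₂G = ∂₁H + F·∂₂H + H·∂₂F holds identically on the relevant open set, then for all (x,h) ∈ D, ∂₁[ ∂₂I(x,h) − H(x, y(x,h))·∂₂y(x,h) ] = 0; i.e. the sufficiency direction of the order-1 telescoper check: ∂_y G = D_x H + H·∂_y F implies that ∂_h I(x,h) = H(x, y(x,h))·∂_h y(x,h) holds up to a function of h alone. -/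

import Mathlib

noncomputable section

/-- Partial derivative with respect to the first variable. -/
def pd1 (f : ℝ × ℝ → ℝ) (p : ℝ × ℝ) : ℝ := deriv (fun t => f (t, p.2)) p.1

/-- Partial derivative with respect to the second variable. -/
def pd2 (f : ℝ × ℝ → ℝ) (p : ℝ × ℝ) : ℝ := deriv (fun t => f (p.1, t)) p.2

/-- The operator `D_x g = ∂₁ g + F · ∂₂ g`. -/
def Dx (F : ℝ × ℝ → ℝ) (g : ℝ × ℝ → ℝ) (p : ℝ × ℝ) : ℝ := pd1 g p + F p * pd2 g p

/-- The operator `D_h g = U⁻¹ · ∂₂ g`. -/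
def Dh (U : ℝ × ℝ → ℝ) (g : ℝ × ℝ → ℝ) (p : ℝ × ℝ) : ℝ := (U p)⁻¹ * pd2 g p

lemma line1_hasDerivAt (f : ℝ × ℝ → ℝ) (p : ℝ × ℝ) (hf : DifferentiableAt ℝ f p) :
    HasDerivAt (fun t => f (t, p.2)) ((fderiv ℝ f p) (1,0)) p.1 := by
  have h := hf.hasFDerivAt.comp_hasDerivAt p.1
    ((hasDerivAt_id p.1).prodMk (hasDerivAt_const p.1 p.2))
  simpa [Function.comp_def] using h

lemma line2_hasDerivAt (f : ℝ × ℝ → ℝ) (p : ℝ × ℝ) (hf : DifferentiableAt ℝ f p) :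
    HasDerivAt (fun t => f (p.1, t)) ((fderiv ℝ f p) (0,1)) p.2 := by
  have h := hf.hasFDerivAt.comp_hasDerivAt p.2
    ((hasDerivAt_const p.2 p.1).prodMk (hasDerivAt_id p.2))
  simpa [Function.comp_def] using h

lemma pd1_eq (f : ℝ × ℝ → ℝ) (p : ℝ × ℝ) (hf : DifferentiableAt ℝ f p) :
    pd1 f p = (fderiv ℝ f p) (1,0) := (line1_hasDerivAt f p hf).deriv

lemma pd2_eq (f : ℝ × ℝ → ℝ) (p : ℝ × ℝ) (hf : DifferentiableAt ℝ f p) :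
    pd2 f p = (fderiv ℝ f p) (0,1) := (line2_hasDerivAt f p hf).deriv

lemma fderiv_apply_pd (f : ℝ × ℝ → ℝ) (p : ℝ × ℝ) (hf : DifferentiableAt ℝ f p) (u v : ℝ) :
    (fderiv ℝ f p) (u, v) = u * pd1 f p + v * pd2 f p := by
  have : (u, v) = u • ((1:ℝ),(0:ℝ)) + v • ((0:ℝ),(1:ℝ)) := by simp
  rw [this, map_add, map_smul, map_smul, pd1_eq f p hf, pd2_eq f p hf]
  simp [smul_eq_mul]

lemma pd2_fun_eq (f : ℝ × ℝ → ℝ) (hf : ContDiff ℝ 2 f) :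
    pd2 f = fun q => (fderiv ℝ f q) (0,1) :=
  funext fun q => pd2_eq f q (hf.differentiable (by norm_num) q)

lemma fderiv_diff (f : ℝ × ℝ → ℝ) (hf : ContDiff ℝ 2 f) :
    Differentiable ℝ (fderiv ℝ f) :=
  (hf.fderiv_right (m := 1) (by norm_num)).differentiable one_ne_zero

lemma pd2_differentiable (f : ℝ × ℝ → ℝ) (hf : ContDiff ℝ 2 f) :
    Differentiable ℝ (pd2 f) := by
  rw [pd2_fun_eq f hf]
  exact fun q => (fderiv_diff f hf q).clm_apply (differentiableAt_const _)

lemma pd_comm (f : ℝ × ℝ → ℝ) (hf : ContDiff ℝ 2 f) (p : ℝ × ℝ) :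
    pd1 (pd2 f) p = pd2 (pd1 f) p := by
  have hdf : Differentiable ℝ f := hf.differentiable (by norm_num)
  have h2 : Differentiable ℝ (fderiv ℝ f) := fderiv_diff f hf
  have hsymm := (hf.contDiffAt (x := p)).isSymmSndFDerivAt (by norm_num)
  have e1 : pd1 (pd2 f) p = fderiv ℝ (fderiv ℝ f) p (1,0) (0,1) := by
    rw [pd2_fun_eq f hf,
      pd1_eq _ _ ((h2 p).clm_apply (differentiableAt_const _)),
      fderiv_clm_apply (h2 p) (differentiableAt_const _)]
    simp
  have e2 : pd2 (pd1 f) p = fderiv ℝ (fderiv ℝ f) p (0,1) (1,0) := by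
    have hpd1 : pd1 f = fun q => (fderiv ℝ f q) (1,0) :=
      funext fun q => pd1_eq f q (hdf q)
    rw [hpd1,
      pd2_eq _ _ ((h2 p).clm_apply (differentiableAt_const _)),
      fderiv_clm_apply (h2 p) (differentiableAt_const _)]
    simp
  rw [e1, e2, hsymm (1,0) (0,1)]

lemma pd2_congr_open (f g : ℝ × ℝ → ℝ) (D : Set (ℝ × ℝ)) (hD : IsOpen D)
    (hfg : ∀ q ∈ D, f q = g q) (p : ℝ × ℝ) (hp : p ∈ D) : pd2 f p = pd2 g p := by
  apply Filter.EventuallyEq.deriv_eq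
  have hc : ContinuousAt (fun t : ℝ => ((p.1 : ℝ), t)) p.2 := by fun_prop
  have hmem : ∀ᶠ t in nhds p.2, ((p.1 : ℝ), t) ∈ D :=
    hc.preimage_mem_nhds (hD.mem_nhds hp)
  exact hmem.mono fun t ht => hfg _ ht

lemma pd2_comp (K y : ℝ × ℝ → ℝ) (p : ℝ × ℝ)
    (hK : DifferentiableAt ℝ K (p.1, y p)) (hy : DifferentiableAt ℝ y p) :
    pd2 (fun q => K (q.1, y q)) p = pd2 K (p.1, y p) * pd2 y p := by
  have hyl : HasDerivAt (fun t => y (p.1, t)) (pd2 y p) p.2 := by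
    have := line2_hasDerivAt y p hy
    rwa [← pd2_eq y p hy] at this
  have hin : HasDerivAt (fun t => ((p.1 : ℝ), y (p.1, t))) ((0:ℝ), pd2 y p) p.2 :=
    (hasDerivAt_const _ _).prodMk hyl
  have h := hK.hasFDerivAt.comp_hasDerivAt p.2 hin
  rw [fderiv_apply_pd K _ hK] at h
  have h2 : HasDerivAt (fun t => K (((p.1 : ℝ), t).1, y (p.1, t)))
      (pd2 K (p.1, y p) * pd2 y p) p.2 := by
    convert h using 1
    · rfl
    · rfl
    · rfl
    · ring
  exact h2.deriv

lemma pd1_comp (K y : ℝ × ℝ → ℝ) (p : ℝ × ℝ)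
    (hK : DifferentiableAt ℝ K (p.1, y p)) (hy : DifferentiableAt ℝ y p) :
    pd1 (fun q => K (q.1, y q)) p = pd1 K (p.1, y p) + pd2 K (p.1, y p) * pd1 y p := by
  have hyl : HasDerivAt (fun t => y (t, p.2)) (pd1 y p) p.1 := by
    have := line1_hasDerivAt y p hy
    rwa [← pd1_eq y p hy] at this
  have hin : HasDerivAt (fun t : ℝ => (t, y (t, p.2))) ((1:ℝ), pd1 y p) p.1 :=
    (hasDerivAt_id p.1).prodMk hyl
  have h := hK.hasFDerivAt.comp_hasDerivAt p.1 hin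
  rw [fderiv_apply_pd K _ hK] at h
  have h2 : HasDerivAt (fun t => K ((t, p.2).1, y (t, p.2)))
      (pd1 K (p.1, y p) + pd2 K (p.1, y p) * pd1 y p) p.1 := by
    convert h using 1
    · rfl
    · rfl
    · rfl
    · ring
  exact h2.deriv

lemma hasDerivAt_comp_line1 (K y : ℝ × ℝ → ℝ) (p : ℝ × ℝ)
    (hK : DifferentiableAt ℝ K (p.1, y p)) (hy : DifferentiableAt ℝ y p) :
    HasDerivAt (fun t => K (t, y (t, p.2)))
      (pd1 K (p.1, y p) + pd2 K (p.1, y p) * pd1 y p) p.1 := by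
  have hyl : HasDerivAt (fun t => y (t, p.2)) (pd1 y p) p.1 := by
    have := line1_hasDerivAt y p hy
    rwa [← pd1_eq y p hy] at this
  have hin : HasDerivAt (fun t : ℝ => (t, y (t, p.2))) ((1:ℝ), pd1 y p) p.1 :=
    (hasDerivAt_id p.1).prodMk hyl
  have h := hK.hasFDerivAt.comp_hasDerivAt p.1 hin
  rw [fderiv_apply_pd K _ hK] at h
  simpa [Function.comp_def, mul_comm] using h

/-- sufficiency of the order-1 telescoper check: if
`∂₂G = ∂₁H + F·∂₂H + H·∂₂F` identically, then
`∂₁[∂₂I(x,h) − H(x, y(x,h))·∂₂y(x,h)] = 0` on `D`. -/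
theorem telescoper_order1_check (F G H : ℝ × ℝ → ℝ)
    (hF : ContDiff ℝ 1 F) (hG : ContDiff ℝ 1 G) (hH : ContDiff ℝ 1 H)
    (D : Set (ℝ × ℝ)) (hD : IsOpen D)
    (y : ℝ × ℝ → ℝ) (hy : ContDiff ℝ 2 y)
    (hy1 : ∀ p ∈ D, pd1 y p = F (p.1, y p))
    (I : ℝ × ℝ → ℝ) (hI : ContDiff ℝ 2 I)
    (hI1 : ∀ p ∈ D, pd1 I p = G (p.1, y p))
    (hrel : ∀ q : ℝ × ℝ, pd2 G q = pd1 H q + F q * pd2 H q + H q * pd2 F q) :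
    ∀ p ∈ D, pd1 (fun q => pd2 I q - H (q.1, y q) * pd2 y q) p = 0 := by
  intro p hp
  have hdy : Differentiable ℝ y := hy.differentiable (by norm_num)
  have hdH : Differentiable ℝ H := hH.differentiable one_ne_zero
  have hdG : Differentiable ℝ G := hG.differentiable one_ne_zero
  have hdF : Differentiable ℝ F := hF.differentiable one_ne_zero
  -- differentiability of the two pieces along the horizontal line
  have hA : DifferentiableAt ℝ (fun t => pd2 I (t, p.2)) p.1 :=
    (line1_hasDerivAt (pd2 I) p (pd2_differentiable I hI p)).differentiableAt
  have hB1 : HasDerivAt (fun t => H (t, y (t, p.2)))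
      (pd1 H (p.1, y p) + pd2 H (p.1, y p) * pd1 y p) p.1 :=
    hasDerivAt_comp_line1 H y p (hdH _) (hdy p)
  have hB2 : HasDerivAt (fun t => pd2 y (t, p.2)) (pd1 (pd2 y) p) p.1 := by
    have h := line1_hasDerivAt (pd2 y) p (pd2_differentiable y hy p)
    rwa [← pd1_eq (pd2 y) p (pd2_differentiable y hy p)] at h
  have hB : HasDerivAt (fun t => H (t, y (t, p.2)) * pd2 y (t, p.2))
      ((pd1 H (p.1, y p) + pd2 H (p.1, y p) * pd1 y p) * pd2 y p
        + H (p.1, y p) * pd1 (pd2 y) p) p.1 := by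
    have := hB1.mul hB2
    exact this
  -- split the pd1 of the difference
  have split : pd1 (fun q => pd2 I q - H (q.1, y q) * pd2 y q) p
      = pd1 (pd2 I) p - ((pd1 H (p.1, y p) + pd2 H (p.1, y p) * pd1 y p) * pd2 y p
        + H (p.1, y p) * pd1 (pd2 y) p) := by
    have hr : pd1 (fun q => pd2 I q - H (q.1, y q) * pd2 y q) p
        = deriv (fun t => pd2 I (t, p.2) - H (t, y (t, p.2)) * pd2 y (t, p.2)) p.1 := rfl
    rw [hr, deriv_fun_sub hA hB.differentiableAt, hB.deriv]
    rfl
  rw [split]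
  -- compute pd1 (pd2 I) p
  have e1 : pd1 (pd2 I) p = pd2 G (p.1, y p) * pd2 y p := by
    rw [pd_comm I hI p,
      pd2_congr_open (pd1 I) (fun q => G (q.1, y q)) D hD hI1 p hp,
      pd2_comp G y p (hdG _) (hdy p)]
  -- compute pd1 (pd2 y) p
  have e2 : pd1 (pd2 y) p = pd2 F (p.1, y p) * pd2 y p := by
    rw [pd_comm y hy p,
      pd2_congr_open (pd1 y) (fun q => F (q.1, y q)) D hD hy1 p hp,
      pd2_comp F y p (hdF _) (hdy p)]
  rw [e1, e2, hy1 p hp, hrel (p.1, y p)]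
  ring
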